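/- Let T be a bounded operator on a Hilbert space H and suppose there is a sequence of unit vectors (xₙ) with ⟨xₙ, Txₙ⟩ → q where |q| = ‖T‖ and q ≠ 0, and such that Txₙ converges to some y. Then ‖y‖ = |q|, Txₙ − q·xₙ → 0, and y is an eigenvector of T with eigenvalue q. -/

import Mathlib

theorem limit_is_eigenvector
    {H : Type*} [NormedAddCommGroup H] [InnerProductSpace ℂ H] [CompleteSpace H]
    (T : H →L[ℂ] H) (x : ℕ → H) (hx : ∀ n, ‖x n‖ = 1) (q : ℂ) (y : H)
    (hq : Filter.Tendsto (fun n => (inner ℂ (x n) (T (x n)) : ℂ)) Filter.atTop (nhds q))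
    (hqnorm : ‖q‖ = ‖T‖) (hq0 : q ≠ 0)
    (hy : Filter.Tendsto (fun n => T (x n)) Filter.atTop (nhds y)) :
    ‖y‖ = ‖q‖ ∧
      Filter.Tendsto (fun n => T (x n) - q • x n) Filter.atTop (nhds 0) ∧
      y ≠ 0 ∧ T y = q • y := by
  set g : ℕ → ℝ := fun n => 2*‖q‖^2 - 2*(q * (starRingEnd ℂ) (inner ℂ (x n) (T (x n)))).re with hg
  have hgt : Filter.Tendsto g Filter.atTop (nhds 0) := by
    have h1 : Filter.Tendsto (fun n => (q * (starRingEnd ℂ) (inner ℂ (x n) (T (x n)))).re)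
        Filter.atTop (nhds ((q * (starRingEnd ℂ) q).re)) := by
      exact (Complex.continuous_re.tendsto _).comp
        ((Filter.Tendsto.const_mul q) ((Complex.continuous_conj.tendsto _).comp hq))
    have : (q * (starRingEnd ℂ) q).re = ‖q‖^2 := by
      rw [Complex.mul_conj]
      simp [Complex.sq_norm]
    rw [this] at h1
    have h2 : Filter.Tendsto g Filter.atTop (nhds (2*‖q‖^2 - 2*‖q‖^2)) :=
      tendsto_const_nhds.sub (h1.const_mul 2)
    rw [show (0:ℝ) = 2*‖q‖^2 - 2*‖q‖^2 by ring]
    exact h2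
  have key : ∀ n, ‖T (x n) - q • x n‖^2 ≤ g n := by
    intro n
    have hexp : ‖T (x n) - q • x n‖^2
        = ‖T (x n)‖^2 - 2*(inner ℂ (T (x n)) (q • x n) : ℂ).re + ‖q • x n‖^2 := by
      exact_mod_cast norm_sub_sq (𝕜 := ℂ) (T (x n)) (q • x n)
    have hin : (inner ℂ (T (x n)) (q • x n) : ℂ) = q * (starRingEnd ℂ) (inner ℂ (x n) (T (x n))) := by
      rw [inner_smul_right, ← inner_conj_symm]
    have hTn : ‖T (x n)‖ ≤ ‖q‖ := by
      calc ‖T (x n)‖ ≤ ‖T‖ * ‖x n‖ := T.le_opNorm _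
        _ = ‖q‖ := by rw [hx n, hqnorm]; ring
    have hTn2 : ‖T (x n)‖^2 ≤ ‖q‖^2 := by
      exact pow_le_pow_left₀ (norm_nonneg _) hTn 2
    have hqx : ‖q • x n‖^2 = ‖q‖^2 := by rw [norm_smul, hx n]; ring
    rw [hexp, hin, hqx, hg]
    dsimp only
    linarith
  have hdiff : Filter.Tendsto (fun n => T (x n) - q • x n) Filter.atTop (nhds 0) := by
    rw [tendsto_zero_iff_norm_tendsto_zero]
    have hsq : Filter.Tendsto (fun n => ‖T (x n) - q • x n‖^2) Filter.atTop (nhds 0) :=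
      squeeze_zero (fun n => sq_nonneg _) key hgt
    have heq : (fun n => ‖T (x n) - q • x n‖) = fun n => Real.sqrt (‖T (x n) - q • x n‖^2) := by
      funext n; rw [Real.sqrt_sq (norm_nonneg _)]
    rw [heq]
    simpa [Function.comp_def] using (Real.continuous_sqrt.tendsto 0).comp hsq
  have hqx : Filter.Tendsto (fun n => q • x n) Filter.atTop (nhds y) := by
    have := hy.sub hdiff
    simpa using this
  have hxlim : Filter.Tendsto x Filter.atTop (nhds (q⁻¹ • y)) := by
    have := hqx.const_smul q⁻¹
    simpa [smul_smul, inv_mul_cancel₀ hq0] using this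
  have hznorm : ‖q⁻¹ • y‖ = 1 := by
    have h1 : Filter.Tendsto (fun n => ‖x n‖) Filter.atTop (nhds ‖q⁻¹ • y‖) :=
      (continuous_norm.tendsto _).comp hxlim
    have h2 : Filter.Tendsto (fun n => ‖x n‖) Filter.atTop (nhds 1) := by
      simpa [hx] using tendsto_const_nhds (x := (1:ℝ)) (f := Filter.atTop (α := ℕ))
    exact tendsto_nhds_unique h1 h2
  have hynorm : ‖y‖ = ‖q‖ := by
    rw [norm_smul, norm_inv, inv_mul_eq_div,
      div_eq_one_iff_eq (norm_ne_zero_iff.mpr hq0)] at hznorm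
    exact hznorm
  have hy0 : y ≠ 0 := by
    intro h
    rw [h, norm_zero] at hynorm
    exact hq0 (norm_eq_zero.mp hynorm.symm)
  have hTz : T (q⁻¹ • y) = y := by
    have h1 : Filter.Tendsto (fun n => T (x n)) Filter.atTop (nhds (T (q⁻¹ • y))) :=
      (T.continuous.tendsto _).comp hxlim
    exact tendsto_nhds_unique h1 hy
  have hTy : T y = q • y := by
    have := congrArg (fun v => q • v) hTz
    simpa [map_smul, smul_smul, mul_inv_cancel₀ hq0] using this
  exact ⟨hynorm, hdiff, hy0, hTy⟩
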